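/- For every x > 0 and every t ≥ 0, the second moment of the capital-per-capita process satisfies E[(X^x_t)²] ≤ 2^{2η−1} e^{σ² t} ( x² + t^{2η−1}/σ² ). -/

import Mathlib

open MeasureTheory Real Set Filter
open scoped ENNReal NNReal

open ProbabilityTheory in
lemma aux_pdf_mul (v : ℝ≥0) (hv : v ≠ 0) (b y : ℝ) :
    gaussianPDFReal 0 v y * Real.exp (b * y)
      = Real.exp ((v : ℝ) * b ^ 2 / 2) * gaussianPDFReal ((v : ℝ) * b) v y := by
  have hvpos : (0:ℝ) < (v:ℝ) := by positivity
  unfold gaussianPDFReal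
  have h1 : -(y - 0) ^ 2 / (2 * (v:ℝ)) + b * y
      = (v:ℝ) * b ^ 2 / 2 + -(y - (v:ℝ) * b) ^ 2 / (2 * (v:ℝ)) := by
    field_simp
    ring
  rw [mul_assoc, ← Real.exp_add, h1, Real.exp_add]
  ring

open ProbabilityTheory in
lemma aux_lintegral_exp_gaussian (v : ℝ≥0) (b : ℝ) :
    ∫⁻ y, ENNReal.ofReal (Real.exp (b * y)) ∂(gaussianReal 0 v)
      = ENNReal.ofReal (Real.exp ((v : ℝ) * b ^ 2 / 2)) := by
  by_cases hv : v = 0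
  · subst hv; simp [gaussianReal_zero_var, lintegral_dirac]
  · rw [gaussianReal_of_var_ne_zero _ hv,
      lintegral_withDensity_eq_lintegral_mul _ (measurable_gaussianPDF _ _) (by fun_prop)]
    have : ∀ y, (gaussianPDF 0 v * fun y => ENNReal.ofReal (Real.exp (b * y))) y
        = ENNReal.ofReal (Real.exp ((v : ℝ) * b ^ 2 / 2)) * gaussianPDF ((v : ℝ) * b) v y := by
      intro y
      simp only [Pi.mul_apply, gaussianPDF,
        ← ENNReal.ofReal_mul (gaussianPDFReal_nonneg _ _ _), aux_pdf_mul v hv b y,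
        ENNReal.ofReal_mul (Real.exp_nonneg _)]
    rw [lintegral_congr this, lintegral_const_mul _ (measurable_gaussianPDF _ _),
      lintegral_gaussianPDF_eq_one _ hv, mul_one]

lemma aux_increment {Ω : Type*} [MeasurableSpace Ω] (P : Measure Ω)
    (W : ℝ → Ω → ℝ) (hWmeas : Measurable (Function.uncurry W))
    (hWgauss : ∀ s t : ℝ, 0 ≤ s → s ≤ t →
      P.map (fun ω => W t ω - W s ω) =
        ProbabilityTheory.gaussianReal 0 (Real.toNNReal (t - s)))
    {s t : ℝ} (hs : 0 ≤ s) (hst : s ≤ t) (b : ℝ) :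
    ∫⁻ ω, ENNReal.ofReal (Real.exp (b * (W t ω - W s ω))) ∂P
      = ENNReal.ofReal (Real.exp ((t - s) * b ^ 2 / 2)) := by
  have hm : Measurable fun ω => W t ω - W s ω :=
    (hWmeas.comp measurable_prodMk_left).sub (hWmeas.comp measurable_prodMk_left)
  rw [← lintegral_map (f := fun y => ENNReal.ofReal (Real.exp (b * y))) (by fun_prop) hm,
    hWgauss s t hs hst, aux_lintegral_exp_gaussian, Real.coe_toNNReal _ (by linarith)]

lemma aux_exp_int (t : ℝ) (ht : 0 ≤ t) (σ : ℝ) (hσ : 0 < σ) :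
    ∫ s in Ioc (0:ℝ) t, Real.exp (-(σ^2 * s)) ≤ 1 / σ^2 := by
  rw [← intervalIntegral.integral_of_le ht]
  have key : ∀ s ∈ Set.uIcc (0:ℝ) t, HasDerivAt (fun u => -(σ^2)⁻¹ * Real.exp (-(σ^2*u)))
      (Real.exp (-(σ^2*s))) s := by
    intro s _
    have h1 : HasDerivAt (fun u : ℝ => -(σ^2*u)) (-(σ^2)) s := by
      simpa using ((hasDerivAt_id s).const_mul (σ^2)).fun_neg
    have h2 := (h1.exp).const_mul (-(σ^2)⁻¹)
    convert h2 using 1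
    · rfl
    · rfl
    · field_simp
  rw [intervalIntegral.integral_eq_sub_of_hasDerivAt key
    ((Real.continuous_exp.comp (by fun_prop)).intervalIntegrable 0 t)]
  have h3 : Real.exp (-(σ^2*t)) ≤ 1 := Real.exp_le_one_iff.mpr (by nlinarith)
  have h4 : (0:ℝ) < σ^2 := by positivity
  rw [mul_zero, neg_zero, Real.exp_zero]
  calc -(σ^2)⁻¹ * Real.exp (-(σ^2*t)) - -(σ^2)⁻¹ * 1 ≤ 0 - -(σ^2)⁻¹ * 1 := by
        have : 0 ≤ (σ^2)⁻¹ * Real.exp (-(σ^2*t)) := by positivity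
        nlinarith
    _ = 1/σ^2 := by field_simp; ring

lemma aux_exp_rpow (z w : ℝ) : (Real.exp z) ^ w = Real.exp (z * w) := by
  rw [Real.rpow_def_of_pos (Real.exp_pos z), Real.log_exp]


/-- Second moment estimate `E[(X^x_t)²] ≤ 2^(2η-1) e^(σ²t) (x² + t^(2η-1)/σ²)` for the
capital-per-capita process in the stochastic Ramsey problem. -/
theorem ramsey_second_moment_estimate
    {Ω : Type*} [MeasurableSpace Ω] (P : Measure Ω) [IsProbabilityMeasure P]
    (α μ σ η : ℝ) (hα0 : 0 < α) (hα1 : α < 1) (hμ : 0 < μ) (hσ : 0 < σ)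
    (hη : η = 1 / (1 - α))
    (W : ℝ → Ω → ℝ)
    (hWmeas : Measurable (Function.uncurry W))
    (hW0 : ∀ᵐ ω ∂P, W 0 ω = 0)
    (hWgauss : ∀ s t : ℝ, 0 ≤ s → s ≤ t →
      P.map (fun ω => W t ω - W s ω) =
        ProbabilityTheory.gaussianReal 0 (Real.toNNReal (t - s)))
    (c : ℝ → Ω → ℝ)
    (hcmeas : Measurable (Function.uncurry c))
    (hcnonneg : ∀ t ω, 0 ≤ c t ω)
    (hcint : ∀ᵐ ω ∂P, ∀ t ≥ (0 : ℝ), IntegrableOn (fun s => c s ω) (Ioc 0 t))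
    (G : ℝ → Ω → ℝ)
    (hG : ∀ t ω, G t ω =
      Real.exp ((∫ s in Ioc (0 : ℝ) t, (1 - α) * (μ + c s ω + σ ^ 2 / 2))
        + (1 - α) * σ * W t ω))
    (X : ℝ → ℝ → Ω → ℝ)
    (hX : ∀ x t ω, X x t ω =
      (G t ω) ^ (-η) * (x ^ (1 - α) + (1 - α) * ∫ s in Ioc (0 : ℝ) t, G s ω) ^ η) :
    ∀ x > (0 : ℝ), ∀ t ≥ (0 : ℝ),
      ∫⁻ ω, ENNReal.ofReal ((X x t ω) ^ 2) ∂P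
        ≤ ENNReal.ofReal
            ((2 : ℝ) ^ (2 * η - 1) * Real.exp (σ ^ 2 * t) * (x ^ 2 + t ^ (2 * η - 1) / σ ^ 2)) := by
  intro x hx t ht
  have h1α : 0 < 1 - α := by linarith
  have hσ2 : (0:ℝ) < σ ^ 2 := by positivity
  have hηpos : 0 < η := by rw [hη]; positivity
  have hηα : η * (1 - α) = 1 := by rw [hη]; field_simp
  have hη1 : 1 ≤ η := by nlinarith
  set p : ℝ := 2 * η with hpdef
  have hp1 : 1 < p := by simp only [hpdef]; nlinarith
  have hp0 : 0 < p := lt_trans one_pos hp1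
  have hpm1 : (0:ℝ) ≤ p - 1 := by linarith
  -- measurability of basic processes
  have hWsec : ∀ r : ℝ, Measurable fun ω => W r ω := fun r => hWmeas.comp measurable_prodMk_left
  have hAm : Measurable fun q : ℝ × Ω =>
      ∫ u in Ioc (0:ℝ) q.1, (1 - α) * (μ + c u q.2 + σ ^ 2 / 2) := by
    have heq : (fun q : ℝ × Ω => ∫ u in Ioc (0:ℝ) q.1, (1 - α) * (μ + c u q.2 + σ ^ 2 / 2))
        = fun q : ℝ × Ω => ∫ u, (Ioc (0:ℝ) q.1).indicator
            (fun u => (1 - α) * (μ + c u q.2 + σ ^ 2 / 2)) u := by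
      funext q; rw [integral_indicator measurableSet_Ioc]
    rw [heq]
    apply StronglyMeasurable.measurable
    apply MeasureTheory.StronglyMeasurable.integral_prod_right'
      (f := fun r : (ℝ × Ω) × ℝ =>
        (Ioc (0:ℝ) r.1.1).indicator (fun u => (1 - α) * (μ + c u r.1.2 + σ ^ 2 / 2)) r.2)
    apply Measurable.stronglyMeasurable
    have heq2 : (fun r : (ℝ × Ω) × ℝ =>
        (Ioc (0:ℝ) r.1.1).indicator (fun u => (1 - α) * (μ + c u r.1.2 + σ ^ 2 / 2)) r.2)
        = fun r : (ℝ × Ω) × ℝ =>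
          if r.2 ∈ Ioc (0:ℝ) r.1.1 then (1 - α) * (μ + c r.2 r.1.2 + σ ^ 2 / 2) else 0 := by
      funext r; rw [Set.indicator_apply]
    rw [heq2]
    refine Measurable.ite ?_ ?_ measurable_const
    · have : {r : (ℝ × Ω) × ℝ | r.2 ∈ Ioc (0:ℝ) r.1.1}
          = {r : (ℝ × Ω) × ℝ | (0:ℝ) < r.2} ∩ {r : (ℝ × Ω) × ℝ | r.2 ≤ r.1.1} := by
        ext r; simp [Set.mem_Ioc]
      rw [this]
      exact (measurableSet_lt measurable_const measurable_snd).inter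
        (measurableSet_le measurable_snd (measurable_fst.fst))
    · exact measurable_const.mul ((measurable_const.add
        (hcmeas.comp (measurable_snd.prodMk measurable_fst.snd))).add measurable_const)
  have hGm : Measurable (Function.uncurry G) := by
    have heq : Function.uncurry G = fun q : ℝ × Ω =>
        Real.exp ((∫ u in Ioc (0:ℝ) q.1, (1 - α) * (μ + c u q.2 + σ ^ 2 / 2))
          + (1 - α) * σ * W q.1 q.2) := by
      funext q; exact hG q.1 q.2
    rw [heq]
    exact Real.measurable_exp.comp (hAm.add (measurable_const.mul hWmeas))
  have hGsec : ∀ r : ℝ, Measurable fun ω => G r ω := fun r => hGm.comp measurable_prodMk_left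
  have hGom : ∀ ω, Measurable fun s => G s ω :=
    fun ω => hGm.comp (measurable_id.prodMk measurable_const)
  have hGpos : ∀ s ω, 0 < G s ω := fun s ω => by rw [hG]; exact Real.exp_pos _
  have hxp2 : ∀ y : ℝ, 0 < y → ∀ r : ℝ, (y ^ r) ^ 2 = y ^ (2 * r) := by
    intro y hy r
    rw [← Real.rpow_natCast (y ^ r) 2, ← Real.rpow_mul hy.le, mul_comm r]
    norm_num
  -- pointwise bound
  have key1 : ∀ ω, ENNReal.ofReal ((X x t ω) ^ 2)
      ≤ ENNReal.ofReal ((2:ℝ) ^ (p - 1)) * (ENNReal.ofReal (x ^ 2) * ENNReal.ofReal (G t ω ^ (-p))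
        + ENNReal.ofReal (t ^ (p - 1))
            * ∫⁻ s in Ioc (0:ℝ) t, ENNReal.ofReal (G t ω ^ (-p) * G s ω ^ p)) := by
    intro ω
    have hgpos := hGpos t ω
    set b := ∫ s in Ioc (0:ℝ) t, G s ω with hb
    have hb0 : 0 ≤ b := integral_nonneg fun s => (hGpos s ω).le
    have ha0 : (0:ℝ) < x ^ (1 - α) := Real.rpow_pos_of_pos hx _
    have hab : (0:ℝ) ≤ x ^ (1 - α) + (1 - α) * b := by positivity
    have hXsq : (X x t ω) ^ 2 = G t ω ^ (-p) * (x ^ (1 - α) + (1 - α) * b) ^ p := by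
      have habpos : (0:ℝ) < x ^ (1 - α) + (1 - α) * b := by positivity
      rw [hX, ← hb, mul_pow, hxp2 _ hgpos (-η), hxp2 _ habpos η]
      rw [show (2:ℝ) * -η = -p by rw [hpdef]; ring, ← hpdef]
    rw [hXsq, ENNReal.ofReal_mul (Real.rpow_nonneg hgpos.le _)]
    have hxp : (x ^ (1 - α)) ^ p = x ^ 2 := by
      rw [← Real.rpow_mul hx.le,
        show (1 - α) * p = ((2:ℕ):ℝ) by push_cast; rw [hpdef]; linear_combination 2 * hηα,
        Real.rpow_natCast]
    have step1 : ENNReal.ofReal ((x ^ (1 - α) + (1 - α) * b) ^ p)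
        ≤ ENNReal.ofReal ((2:ℝ) ^ (p - 1)) * (ENNReal.ofReal (x ^ 2)
            + ENNReal.ofReal (((1 - α) * b) ^ p)) := by
      rw [← ENNReal.ofReal_rpow_of_nonneg hab hp0.le, ENNReal.ofReal_add ha0.le (by positivity)]
      calc (ENNReal.ofReal (x ^ (1 - α)) + ENNReal.ofReal ((1 - α) * b)) ^ p
          ≤ 2 ^ (p - 1) * ((ENNReal.ofReal (x ^ (1 - α))) ^ p
              + (ENNReal.ofReal ((1 - α) * b)) ^ p) :=
            ENNReal.rpow_add_le_mul_rpow_add_rpow _ _ hp1.le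
        _ = ENNReal.ofReal ((2:ℝ) ^ (p - 1)) * (ENNReal.ofReal (x ^ 2)
              + ENNReal.ofReal (((1 - α) * b) ^ p)) := by
            rw [ENNReal.ofReal_rpow_of_nonneg ha0.le hp0.le, hxp,
              ENNReal.ofReal_rpow_of_nonneg (by positivity : (0:ℝ) ≤ (1 - α) * b) hp0.le,
              show (2:ℝ≥0∞) = ENNReal.ofReal 2 by norm_num,
              ENNReal.ofReal_rpow_of_pos two_pos]
    have hLb : ENNReal.ofReal (((1 - α) * b) ^ p)
        ≤ ENNReal.ofReal (t ^ (p - 1)) * ∫⁻ s in Ioc (0:ℝ) t, ENNReal.ofReal (G s ω ^ p) := by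
      have hpq := Real.HolderConjugate.conjExponent hp1
      have hmf : AEMeasurable (fun s => ENNReal.ofReal (G s ω)) (volume.restrict (Ioc (0:ℝ) t)) :=
        ((hGom ω).ennreal_ofReal).aemeasurable
      have holder := ENNReal.lintegral_mul_le_Lp_mul_Lq (volume.restrict (Ioc (0:ℝ) t)) hpq hmf
        (aemeasurable_const (b := (1:ℝ≥0∞)))
      simp only [Pi.mul_apply, mul_one, ENNReal.one_rpow, lintegral_const, one_mul] at holder
      rw [Measure.restrict_apply_univ, Real.volume_Ioc, sub_zero] at holder
      have h1 : ENNReal.ofReal ((1 - α) * b) ≤ ∫⁻ s in Ioc (0:ℝ) t, ENNReal.ofReal (G s ω) := by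
        by_cases hi : IntegrableOn (fun s => G s ω) (Ioc (0:ℝ) t)
        · refine le_trans (ENNReal.ofReal_le_ofReal ?_)
            (le_of_eq (ofReal_integral_eq_lintegral_ofReal hi
              (ae_of_all _ fun s => (hGpos s ω).le)))
          nlinarith
        · rw [hb, integral_undef hi, mul_zero]; simp
      calc ENNReal.ofReal (((1 - α) * b) ^ p)
          = (ENNReal.ofReal ((1 - α) * b)) ^ p :=
            (ENNReal.ofReal_rpow_of_nonneg (by positivity) hp0.le).symm
        _ ≤ ((∫⁻ s in Ioc (0:ℝ) t, ENNReal.ofReal (G s ω) ^ p) ^ (1/p)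
              * (ENNReal.ofReal t) ^ (1/(Real.conjExponent p))) ^ p :=
            ENNReal.rpow_le_rpow (h1.trans holder) hp0.le
        _ = (∫⁻ s in Ioc (0:ℝ) t, ENNReal.ofReal (G s ω) ^ p)
              * (ENNReal.ofReal t) ^ (p - 1) := by
            rw [ENNReal.mul_rpow_of_nonneg _ _ hp0.le, ← ENNReal.rpow_mul, ← ENNReal.rpow_mul,
              one_div_mul_cancel hp0.ne', ENNReal.rpow_one,
              show 1/(Real.conjExponent p) * p = p - 1 by
                rw [Real.conjExponent]
                have h1 : p ≠ 0 := hp0.ne'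
                have h2 : p - 1 ≠ 0 := by intro h; rw [sub_eq_zero] at h; exact (ne_of_gt hp1) h
                field_simp]
        _ = ENNReal.ofReal (t ^ (p - 1)) * ∫⁻ s in Ioc (0:ℝ) t, ENNReal.ofReal (G s ω ^ p) := by
            rw [mul_comm, ENNReal.ofReal_rpow_of_nonneg ht hpm1]
            congr 1
            exact lintegral_congr fun s => ENNReal.ofReal_rpow_of_nonneg (hGpos s ω).le hp0.le
    have hK' : (∫⁻ s in Ioc (0:ℝ) t, ENNReal.ofReal (G t ω ^ (-p) * G s ω ^ p))
        = ENNReal.ofReal (G t ω ^ (-p)) * ∫⁻ s in Ioc (0:ℝ) t, ENNReal.ofReal (G s ω ^ p) := by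
      rw [← lintegral_const_mul' _ _ ENNReal.ofReal_ne_top]
      exact lintegral_congr fun s => ENNReal.ofReal_mul (Real.rpow_nonneg hgpos.le _)
    calc ENNReal.ofReal (G t ω ^ (-p)) * ENNReal.ofReal ((x ^ (1 - α) + (1 - α) * b) ^ p)
        ≤ ENNReal.ofReal (G t ω ^ (-p)) * (ENNReal.ofReal ((2:ℝ) ^ (p - 1))
            * (ENNReal.ofReal (x ^ 2) + ENNReal.ofReal (((1 - α) * b) ^ p))) :=
          mul_le_mul_right step1 _
      _ ≤ ENNReal.ofReal (G t ω ^ (-p)) * (ENNReal.ofReal ((2:ℝ) ^ (p - 1))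
            * (ENNReal.ofReal (x ^ 2) + ENNReal.ofReal (t ^ (p - 1))
                * ∫⁻ s in Ioc (0:ℝ) t, ENNReal.ofReal (G s ω ^ p))) :=
          mul_le_mul_right (mul_le_mul_right (add_le_add_right hLb _) _) _
      _ = ENNReal.ofReal ((2:ℝ) ^ (p - 1)) * (ENNReal.ofReal (x ^ 2)
            * ENNReal.ofReal (G t ω ^ (-p)) + ENNReal.ofReal (t ^ (p - 1))
              * ∫⁻ s in Ioc (0:ℝ) t, ENNReal.ofReal (G t ω ^ (-p) * G s ω ^ p)) := by
          rw [hK']; ring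

  -- integrability and drift lower bounds
  have hfint : ∀ ω, IntegrableOn (fun u => c u ω) (Ioc (0:ℝ) t) → ∀ a b' : ℝ, 0 ≤ a → b' ≤ t →
      IntegrableOn (fun u => (1 - α) * (μ + c u ω + σ ^ 2 / 2)) (Ioc a b') := by
    intro ω hci a b' ha hbt
    have heq : (fun u => (1 - α) * (μ + c u ω + σ ^ 2 / 2))
        = fun u => ((1 - α) * (μ + σ ^ 2 / 2)) + (1 - α) * c u ω := by funext u; ring
    rw [heq]
    refine (integrableOn_const measure_Ioc_lt_top.ne).add ?_
    exact (hci.mono_set (Set.Ioc_subset_Ioc ha hbt)).const_mul _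
  have hdriftlb : ∀ ω, IntegrableOn (fun u => c u ω) (Ioc (0:ℝ) t) →
      ∀ a b' : ℝ, 0 ≤ a → a ≤ b' → b' ≤ t →
      (1 - α) * (σ ^ 2 / 2) * (b' - a) ≤ ∫ u in Ioc a b', (1 - α) * (μ + c u ω + σ ^ 2 / 2) := by
    intro ω hci a b' ha hab hbt
    have hmono := setIntegral_mono_on (μ := volume) (s := Ioc a b')
      (f := fun _ => (1 - α) * (σ ^ 2 / 2)) (g := fun u => (1 - α) * (μ + c u ω + σ ^ 2 / 2))
      (integrableOn_const measure_Ioc_lt_top.ne) (hfint ω hci a b' ha hbt)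
      measurableSet_Ioc (fun u _ => by nlinarith [hcnonneg u ω])
    refine le_trans (le_of_eq ?_) hmono
    rw [setIntegral_const, Real.volume_real_Ioc_of_le hab, smul_eq_mul]
    ring
  -- first moment term
  have hI1 : ∫⁻ ω, ENNReal.ofReal (G t ω ^ (-p)) ∂P ≤ ENNReal.ofReal (Real.exp (σ ^ 2 * t)) := by
    have hae1 : ∀ᵐ ω ∂P, ENNReal.ofReal (G t ω ^ (-p))
        ≤ ENNReal.ofReal (Real.exp (-(σ ^ 2 * t)))
            * ENNReal.ofReal (Real.exp (-(2 * σ) * (W t ω - W 0 ω))) := by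
      filter_upwards [hW0, hcint] with ω hω0 hωint
      rw [hG t ω, aux_exp_rpow, ← ENNReal.ofReal_mul (Real.exp_nonneg _), ← Real.exp_add]
      apply ENNReal.ofReal_le_ofReal
      apply Real.exp_le_exp.mpr
      rw [hω0]
      have hA := hdriftlb ω (hωint t ht) 0 t le_rfl ht le_rfl
      have hcoef : (1 - α) * σ * p = 2 * σ := by rw [hpdef]; linear_combination 2 * σ * hηα
      have hc2 : p * ((1 - α) * (σ ^ 2 / 2) * (t - 0)) = σ ^ 2 * t := by
        rw [hpdef]; linear_combination σ ^ 2 * t * hηα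
      obtain ⟨A, hAdef⟩ : ∃ A, A = ∫ u in Ioc (0:ℝ) t, (1 - α) * (μ + c u ω + σ ^ 2 / 2) :=
        ⟨_, rfl⟩
      rw [← hAdef] at hA ⊢
      have h5 : σ ^ 2 * t ≤ p * A := by
        rw [← hc2]; exact mul_le_mul_of_nonneg_left hA hp0.le
      have hexpand : (A + (1 - α) * σ * W t ω) * (-p) = -(p * A) - 2 * σ * W t ω := by
        linear_combination (-(W t ω)) * hcoef
      rw [hexpand]
      linarith [h5]
    calc ∫⁻ ω, ENNReal.ofReal (G t ω ^ (-p)) ∂P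
        ≤ ∫⁻ ω, ENNReal.ofReal (Real.exp (-(σ ^ 2 * t)))
            * ENNReal.ofReal (Real.exp (-(2 * σ) * (W t ω - W 0 ω))) ∂P :=
          lintegral_mono_ae hae1
      _ = ENNReal.ofReal (Real.exp (-(σ ^ 2 * t)))
            * ENNReal.ofReal (Real.exp ((t - 0) * (-(2 * σ)) ^ 2 / 2)) := by
          rw [lintegral_const_mul' _ _ ENNReal.ofReal_ne_top,
            aux_increment P W hWmeas hWgauss le_rfl ht (-(2 * σ))]
      _ = ENNReal.ofReal (Real.exp (σ ^ 2 * t)) := by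
          rw [← ENNReal.ofReal_mul (Real.exp_nonneg _), ← Real.exp_add]
          congr 1
          ring
  -- second term
  have hmeas2 : Measurable (fun q : Ω × ℝ => ENNReal.ofReal (G t q.1 ^ (-p) * G q.2 q.1 ^ p)) := by
    have h1 : Measurable fun q : Ω × ℝ => G t q.1 := (hGsec t).comp measurable_fst
    have h2 : Measurable fun q : Ω × ℝ => G q.2 q.1 :=
      hGm.comp (measurable_snd.prodMk measurable_fst)
    exact ((h1.pow measurable_const).mul (h2.pow measurable_const)).ennreal_ofReal
  have hI2 : ∫⁻ ω, (∫⁻ s in Ioc (0:ℝ) t, ENNReal.ofReal (G t ω ^ (-p) * G s ω ^ p)) ∂P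
      ≤ ENNReal.ofReal (Real.exp (σ ^ 2 * t)) * ENNReal.ofReal (1 / σ ^ 2) := by
    rw [lintegral_lintegral_swap hmeas2.aemeasurable]
    calc ∫⁻ s in Ioc (0:ℝ) t, ∫⁻ ω, ENNReal.ofReal (G t ω ^ (-p) * G s ω ^ p) ∂P
        ≤ ∫⁻ s in Ioc (0:ℝ) t, ENNReal.ofReal (Real.exp (σ ^ 2 * t))
            * ENNReal.ofReal (Real.exp (-(σ ^ 2 * s))) := by
          apply lintegral_mono_ae
          rw [ae_restrict_iff' measurableSet_Ioc]
          apply ae_of_all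
          intro s hs
          have hs0 : (0:ℝ) ≤ s := hs.1.le
          have hae2 : ∀ᵐ ω ∂P, ENNReal.ofReal (G t ω ^ (-p) * G s ω ^ p)
              ≤ ENNReal.ofReal (Real.exp (-(σ ^ 2 * (t - s))))
                  * ENNReal.ofReal (Real.exp (-(2 * σ) * (W t ω - W s ω))) := by
            filter_upwards [hcint] with ω hωint
            rw [hG t ω, hG s ω, aux_exp_rpow, aux_exp_rpow, ← Real.exp_add,
              ← ENNReal.ofReal_mul (Real.exp_nonneg _), ← Real.exp_add]
            apply ENNReal.ofReal_le_ofReal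
            apply Real.exp_le_exp.mpr
            have hsplit : (∫ u in Ioc (0:ℝ) t, (1 - α) * (μ + c u ω + σ ^ 2 / 2))
                = (∫ u in Ioc (0:ℝ) s, (1 - α) * (μ + c u ω + σ ^ 2 / 2))
                  + ∫ u in Ioc s t, (1 - α) * (μ + c u ω + σ ^ 2 / 2) := by
              rw [← setIntegral_union (Set.Ioc_disjoint_Ioc_of_le le_rfl) measurableSet_Ioc
                (hfint ω (hωint t ht) 0 s le_rfl hs.2) (hfint ω (hωint t ht) s t hs0 le_rfl),
                Set.Ioc_union_Ioc_eq_Ioc hs0 hs.2]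
            have hA := hdriftlb ω (hωint t ht) s t hs0 hs.2 le_rfl
            have hcoef : (1 - α) * σ * p = 2 * σ := by rw [hpdef]; linear_combination 2 * σ * hηα
            have hc2 : p * ((1 - α) * (σ ^ 2 / 2) * (t - s)) = σ ^ 2 * (t - s) := by
              rw [hpdef]; linear_combination σ ^ 2 * (t - s) * hηα
            rw [hsplit]
            obtain ⟨As, hAs⟩ : ∃ A, A = ∫ u in Ioc (0:ℝ) s, (1 - α) * (μ + c u ω + σ ^ 2 / 2) :=
              ⟨_, rfl⟩
            obtain ⟨B, hB⟩ : ∃ B, B = ∫ u in Ioc s t, (1 - α) * (μ + c u ω + σ ^ 2 / 2) :=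
              ⟨_, rfl⟩
            rw [← hB] at hA
            rw [← hAs, ← hB]
            have h5 : σ ^ 2 * (t - s) ≤ p * B := by
              rw [← hc2]; exact mul_le_mul_of_nonneg_left hA hp0.le
            have hexpand : ((As + B) + (1 - α) * σ * W t ω) * (-p)
                + (As + (1 - α) * σ * W s ω) * p
                = -(p * B) - 2 * σ * (W t ω - W s ω) := by
              linear_combination (W s ω - W t ω) * hcoef
            rw [hexpand]
            linarith [h5]
          calc ∫⁻ ω, ENNReal.ofReal (G t ω ^ (-p) * G s ω ^ p) ∂P
              ≤ ∫⁻ ω, ENNReal.ofReal (Real.exp (-(σ ^ 2 * (t - s))))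
                  * ENNReal.ofReal (Real.exp (-(2 * σ) * (W t ω - W s ω))) ∂P :=
                lintegral_mono_ae hae2
            _ = ENNReal.ofReal (Real.exp (-(σ ^ 2 * (t - s))))
                  * ENNReal.ofReal (Real.exp ((t - s) * (-(2 * σ)) ^ 2 / 2)) := by
                rw [lintegral_const_mul' _ _ ENNReal.ofReal_ne_top,
                  aux_increment P W hWmeas hWgauss hs0 hs.2 (-(2 * σ))]
            _ ≤ ENNReal.ofReal (Real.exp (σ ^ 2 * t)) * ENNReal.ofReal (Real.exp (-(σ ^ 2 * s))) := by
                rw [← ENNReal.ofReal_mul (Real.exp_nonneg _), ← Real.exp_add,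
                  ← ENNReal.ofReal_mul (Real.exp_nonneg _), ← Real.exp_add]
                apply ENNReal.ofReal_le_ofReal
                apply Real.exp_le_exp.mpr
                apply le_of_eq
                ring
      _ = ENNReal.ofReal (Real.exp (σ ^ 2 * t))
            * ∫⁻ s in Ioc (0:ℝ) t, ENNReal.ofReal (Real.exp (-(σ ^ 2 * s))) :=
          lintegral_const_mul' _ _ ENNReal.ofReal_ne_top
      _ ≤ ENNReal.ofReal (Real.exp (σ ^ 2 * t)) * ENNReal.ofReal (1 / σ ^ 2) := by
          apply mul_le_mul_right
          have hint : IntegrableOn (fun s : ℝ => Real.exp (-(σ ^ 2 * s))) (Ioc (0:ℝ) t) :=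
            Continuous.integrableOn_Ioc (by fun_prop)
          rw [← ofReal_integral_eq_lintegral_ofReal hint
            (ae_of_all _ fun s => Real.exp_nonneg _)]
          exact ENNReal.ofReal_le_ofReal (aux_exp_int t ht σ hσ)
  -- final assembly
  have hmeasF1 : Measurable fun ω => ENNReal.ofReal (x ^ 2) * ENNReal.ofReal (G t ω ^ (-p)) :=
    measurable_const.mul (((hGsec t).pow measurable_const).ennreal_ofReal)
  calc ∫⁻ ω, ENNReal.ofReal ((X x t ω) ^ 2) ∂P
      ≤ ∫⁻ ω, ENNReal.ofReal ((2:ℝ) ^ (p - 1))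
          * (ENNReal.ofReal (x ^ 2) * ENNReal.ofReal (G t ω ^ (-p))
            + ENNReal.ofReal (t ^ (p - 1))
              * ∫⁻ s in Ioc (0:ℝ) t, ENNReal.ofReal (G t ω ^ (-p) * G s ω ^ p)) ∂P :=
        lintegral_mono key1
    _ = ENNReal.ofReal ((2:ℝ) ^ (p - 1))
          * ((ENNReal.ofReal (x ^ 2)) * (∫⁻ ω, ENNReal.ofReal (G t ω ^ (-p)) ∂P)
            + ENNReal.ofReal (t ^ (p - 1))
              * ∫⁻ ω, (∫⁻ s in Ioc (0:ℝ) t, ENNReal.ofReal (G t ω ^ (-p) * G s ω ^ p)) ∂P) := by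
        rw [lintegral_const_mul' _ _ ENNReal.ofReal_ne_top,
          lintegral_add_left hmeasF1,
          lintegral_const_mul' _ _ ENNReal.ofReal_ne_top,
          lintegral_const_mul' _ _ ENNReal.ofReal_ne_top]
    _ ≤ ENNReal.ofReal ((2:ℝ) ^ (p - 1))
          * ((ENNReal.ofReal (x ^ 2)) * ENNReal.ofReal (Real.exp (σ ^ 2 * t))
            + ENNReal.ofReal (t ^ (p - 1))
              * (ENNReal.ofReal (Real.exp (σ ^ 2 * t)) * ENNReal.ofReal (1 / σ ^ 2))) := by
        gcongr
    _ = ENNReal.ofReal ((2:ℝ) ^ (p - 1) * Real.exp (σ ^ 2 * t) * (x ^ 2 + t ^ (p - 1) / σ ^ 2)) := by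
        rw [← ENNReal.ofReal_mul (by positivity : (0:ℝ) ≤ x ^ 2),
          ← ENNReal.ofReal_mul (Real.exp_nonneg _),
          ← ENNReal.ofReal_mul (Real.rpow_nonneg ht _),
          ← ENNReal.ofReal_add (by positivity) (by positivity),
          ← ENNReal.ofReal_mul (Real.rpow_nonneg (by norm_num) _)]
        congr 1
        field_simp
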